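/- Let G be a finite simple graph on vertex set [n] with [n] = A ⊔ B ⊔ C a partition into nonempty sets such that the induced subgraph of G on B is a complete graph, the labels satisfy a < b < c whenever a ∈ A, b ∈ B, c ∈ C, and, letting H_1 and H_2 denote the induced subgraphs of G on A ∪ B and on B ∪ C respectively, E(G) = E(H_1) ∪ E(H_2). Then the initial ideals with respect to the lexicographic order satisfy in_<(J_G) = in_<(J_{H_1}) + in_<(J_{H_2}). -/

import Mathlib

open MvPolynomial

/-- The binomial edge ideal of a graph `G` on `[n]`, inside
`k[x_1,…,x_n,y_1,…,y_n]`. The variables are indexed by `Lex (Fin n ⊕ Fin n)`,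
`x_i` being the variable `toLex (Sum.inl i)` and `y_i` the variable
`toLex (Sum.inr i)`; the linear order on the index type then corresponds to
`x_1 > x_2 > … > x_n > y_1 > … > y_n` (smaller index = bigger variable). -/
noncomputable def binomialEdgeIdeal (n : ℕ) (k : Type*) [Field k]
    (G : SimpleGraph (Fin n)) :
    Ideal (MvPolynomial (Lex (Fin n ⊕ Fin n)) k) :=
  Ideal.span {f | ∃ i j : Fin n, G.Adj i j ∧
    f = X (toLex (Sum.inl i)) * X (toLex (Sum.inr j)) -
      X (toLex (Sum.inl j)) * X (toLex (Sum.inr i))}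

/-- The initial ideal of an ideal `I` with respect to the lexicographic
monomial order determined by `x_1 > … > x_n > y_1 > … > y_n`: the ideal
generated by the leading monomials (the `Finsupp.Lex`-largest monomials of the
support) of the nonzero elements of `I`. -/
noncomputable def initialIdeal (n : ℕ) (k : Type*) [Field k]
    (I : Ideal (MvPolynomial (Lex (Fin n ⊕ Fin n)) k)) :
    Ideal (MvPolynomial (Lex (Fin n ⊕ Fin n)) k) :=
  Ideal.span {g | ∃ f ∈ I, f ≠ 0 ∧ ∃ m ∈ f.support,
    (∀ m' ∈ f.support, toLex m' ≤ toLex m) ∧ g = monomial m (1 : k)}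

namespace BEI

variable {n : ℕ} {k : Type*} [Field k]

/-- the variable `x_v` -/
abbrev xvar (v : Fin n) : Lex (Fin n ⊕ Fin n) := toLex (Sum.inl v)
/-- the variable `y_v` -/
abbrev yvar (v : Fin n) : Lex (Fin n ⊕ Fin n) := toLex (Sum.inr v)

lemma xvar_injective : Function.Injective (xvar (n := n)) := by
  intro a b h
  simpa [xvar] using h

lemma yvar_injective : Function.Injective (yvar (n := n)) := by
  intro a b h
  simpa [yvar] using h

lemma xvar_ne_yvar (a b : Fin n) : xvar a ≠ yvar b := by
  simp [xvar, yvar]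

lemma xvar_lt_xvar {a b : Fin n} : xvar a < xvar b ↔ a < b := Sum.Lex.inl_lt_inl_iff

lemma xvar_lt_yvar (a b : Fin n) : xvar a < yvar b := Sum.Lex.inl_lt_inr a b

lemma lt_xvar_elim {j : Lex (Fin n ⊕ Fin n)} {i : Fin n} (h : j < xvar i) :
    ∃ u : Fin n, u < i ∧ j = xvar u := by
  have hj0 : j = toLex (ofLex j) := rfl
  rcases hj : ofLex j with u | u
  · have hju : j = xvar u := by rw [hj0, hj]
    exact ⟨u, xvar_lt_xvar.mp (hju ▸ h), hju⟩
  · exfalso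
    have hju : j = yvar u := by rw [hj0, hj]
    rw [hju] at h
    exact Sum.Lex.not_inr_lt_inl h

/-- the binomial of an edge -/
noncomputable def edgeBinomial (i j : Fin n) : MvPolynomial (Lex (Fin n ⊕ Fin n)) k :=
  X (xvar i) * X (yvar j) - X (xvar j) * X (yvar i)

lemma edgeBinomial_mem {G : SimpleGraph (Fin n)} {i j : Fin n} (h : G.Adj i j) :
    (edgeBinomial i j : MvPolynomial (Lex (Fin n ⊕ Fin n)) k) ∈ binomialEdgeIdeal n k G :=
  Ideal.subset_span ⟨i, j, h, rfl⟩

/-- Path-binomial membership: for any walk `w : b → c` in `H`, any `a` adjacent to `b`, and any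
monomial built by choosing one variable for each vertex in `w.support.dropLast`,
the product with `edgeBinomial a c` is in the edge ideal. -/
lemma walk_mem (H : SimpleGraph (Fin n)) (ε : Fin n → MvPolynomial (Lex (Fin n ⊕ Fin n)) k)
    (hε : ∀ v, ε v = X (xvar v) ∨ ε v = X (yvar v)) :
    ∀ {b c : Fin n} (w : H.Walk b c) (a : Fin n), H.Adj a b →
    ((w.support.dropLast).map ε).prod * edgeBinomial a c ∈ binomialEdgeIdeal n k H := by
  intro b c w
  induction w with
  | nil =>
    intro a hab
    simpa [edgeBinomial] using edgeBinomial_mem (k := k) hab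
  | @cons b d c h w ih =>
    intro a hab
    rw [SimpleGraph.Walk.support_cons,
      List.dropLast_cons_of_ne_nil (SimpleGraph.Walk.support_ne_nil _),
      List.map_cons, List.prod_cons]
    set P : MvPolynomial (Lex (Fin n ⊕ Fin n)) k := ((w.support.dropLast).map ε).prod with hP
    rcases hε b with hx | hy
    · have key : ε b * P * edgeBinomial a c
          = X (xvar a) * (P * edgeBinomial b c) + (P * X (xvar c)) * edgeBinomial a b := by
        rw [hx]; unfold edgeBinomial; ring
      rw [mul_assoc, ← mul_assoc (ε b), key]
      exact Ideal.add_mem _ (Ideal.mul_mem_left _ _ (ih b h))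
        (Ideal.mul_mem_left _ _ (edgeBinomial_mem hab))
    · have key : ε b * P * edgeBinomial a c
          = X (yvar a) * (P * edgeBinomial b c) + (P * X (yvar c)) * edgeBinomial a b := by
        rw [hy]; unfold edgeBinomial; ring
      rw [mul_assoc, ← mul_assoc (ε b), key]
      exact Ideal.add_mem _ (Ideal.mul_mem_left _ _ (ih b h))
        (Ideal.mul_mem_left _ _ (edgeBinomial_mem hab))


lemma prod_X_map (g : Fin n → Lex (Fin n ⊕ Fin n)) (l : List (Fin n)) :
    ((l.map fun v => (X (g v) : MvPolynomial (Lex (Fin n ⊕ Fin n)) k)).prod)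
      = monomial ((l.map fun v => Finsupp.single (g v) 1).sum) 1 := by
  induction l with
  | nil => simp
  | cons v t ih =>
    have hX : (X (g v) : MvPolynomial (Lex (Fin n ⊕ Fin n)) k)
        = monomial (Finsupp.single (g v) 1) 1 := rfl
    simp [ih, hX, monomial_mul]

lemma sum_single_le (μ : Lex (Fin n ⊕ Fin n) →₀ ℕ) :
    ∀ l : List (Lex (Fin n ⊕ Fin n)), l.Nodup →
    (∀ idx ∈ l, μ idx ≠ 0) →
    (l.map fun idx => Finsupp.single idx (1 : ℕ)).sum ≤ μ := by
  classical
  intro l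
  induction l generalizing μ with
  | nil => intro _ _; simp
  | cons a t ih =>
    intro hnd hmem
    have ha : Finsupp.single a 1 ≤ μ := by
      rw [Finsupp.single_le_iff]
      exact Nat.one_le_iff_ne_zero.2 (hmem a (by simp))
    have ht : (t.map fun idx => Finsupp.single idx (1 : ℕ)).sum ≤ μ - Finsupp.single a 1 := by
      refine ih (μ - Finsupp.single a 1) hnd.of_cons (fun idx hidx => ?_)
      have hne : idx ≠ a := by
        rintro rfl
        exact (List.nodup_cons.mp hnd).1 hidx
      rw [Finsupp.tsub_apply, Finsupp.single_apply, if_neg (fun h => hne h.symm)]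
      simpa using hmem idx (List.mem_cons_of_mem _ hidx)
    calc (List.map (fun idx => Finsupp.single idx (1:ℕ)) (a :: t)).sum
        = Finsupp.single a 1 + (t.map fun idx => Finsupp.single idx (1 : ℕ)).sum := by
          simp
      _ ≤ Finsupp.single a 1 + (μ - Finsupp.single a 1) := by
          exact add_le_add (le_refl _) ht
      _ = μ := add_tsub_cancel_of_le ha

lemma support_eq_dropLast_concat {V : Type*} {H : SimpleGraph V} :
    ∀ {a c : V} (w : H.Walk a c), w.support = w.support.dropLast ++ [c] := by
  intro a c w
  induction w with
  | nil => rfl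
  | cons h w ih =>
    rw [SimpleGraph.Walk.support_cons,
      List.dropLast_cons_of_ne_nil (SimpleGraph.Walk.support_ne_nil w), List.cons_append]
    exact congrArg _ ih


/-- Main construction: from a suitable walk, `monomial m 1` lies in the initial ideal. -/
lemma monomial_mem_initial_of_walk (H : SimpleGraph (Fin n))
    (m : Lex (Fin n ⊕ Fin n) →₀ ℕ) {i' j' : Fin n} (hij : i' < j')
    (hx : m (xvar i') ≠ 0) (hy : m (yvar j') ≠ 0)
    (w : H.Walk i' j') (hsup : ∀ z ∈ w.support, m (xvar z) ≠ 0 ∨ m (yvar z) ≠ 0) :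
    monomial m (1 : k) ∈ initialIdeal n k (binomialEdgeIdeal n k H) := by
  classical
  -- replace by a path
  have hbp : w.bypass.IsPath := SimpleGraph.Walk.bypass_isPath w
  have hbsub := SimpleGraph.Walk.support_bypass_subset w
  set p := w.bypass with hp
  clear_value p
  clear hp
  cases p with
  | nil => exact absurd hij (lt_irrefl _)
  | @cons _ b _ hadj p' =>
    rw [SimpleGraph.Walk.cons_isPath_iff] at hbp
    obtain ⟨hp'path, hi'notin⟩ := hbp
    -- the interior list
    set l : List (Fin n) := p'.support.dropLast with hl
    have hlsubp' : ∀ z ∈ l, z ∈ p'.support := fun z hz => List.dropLast_sublist _ |>.mem hz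
    have hlsub : ∀ z ∈ l, z ∈ w.support := by
      intro z hz
      exact hbsub (by
        rw [SimpleGraph.Walk.support_cons]
        exact List.mem_cons_of_mem _ (hlsubp' z hz))
    have hlnd : l.Nodup := hp'path.support_nodup.sublist (List.dropLast_sublist _)
    have hi'l : i' ∉ l := fun h => hi'notin (hlsubp' _ h)
    have hj'l : j' ∉ l := by
      intro h
      have hconcat := support_eq_dropLast_concat p'
      have : ¬ p'.support.Nodup := by
        rw [hconcat]
        intro hnd
        rw [List.nodup_append] at hnd
        exact hnd.2.2 j' h j' (by simp) rfl
      exact this hp'path.support_nodup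
    have hlact : ∀ z ∈ l, m (xvar z) ≠ 0 ∨ m (yvar z) ≠ 0 := fun z hz => hsup z (hlsub z hz)
    -- the chosen variable for each vertex
    set vr : Fin n → Lex (Fin n ⊕ Fin n) :=
      fun v => if m (xvar v) ≠ 0 then xvar v else yvar v with hvr
    have hvr_inj : Function.Injective vr := by
      intro a b h
      simp only [hvr] at h
      by_cases ha : m (xvar a) ≠ 0 <;> by_cases hb : m (xvar b) ≠ 0
      · rw [if_pos ha, if_pos hb] at h; exact xvar_injective h
      · rw [if_pos ha, if_neg hb] at h; exact absurd h (xvar_ne_yvar a b)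
      · rw [if_neg ha, if_pos hb] at h; exact absurd h.symm (xvar_ne_yvar b a)
      · rw [if_neg ha, if_neg hb] at h; exact yvar_injective h
    have hvr_active : ∀ z ∈ l, m (vr z) ≠ 0 := by
      intro z hz
      by_cases hxz : m (xvar z) ≠ 0
      · simp only [hvr]; rw [if_pos hxz]; exact hxz
      · simp only [hvr]; rw [if_neg hxz]
        rcases hlact z hz with h | h
        · exact absurd h hxz
        · exact h
    have hvr_cases : ∀ v, vr v = xvar v ∨ vr v = yvar v := by
      intro v
      by_cases hxz : m (xvar v) ≠ 0 <;> simp [hvr, hxz]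
    -- membership of the path binomial
    set ε : Fin n → MvPolynomial (Lex (Fin n ⊕ Fin n)) k := fun v => X (vr v) with hε
    have hmem0 := walk_mem H ε (fun v => by rcases hvr_cases v with h | h <;> [left; right] <;>
      simp [hε, h]) p' i' hadj
    set Q : Lex (Fin n ⊕ Fin n) →₀ ℕ := (l.map fun v => Finsupp.single (vr v) 1).sum with hQ
    have hprod : ((l.map ε).prod : MvPolynomial (Lex (Fin n ⊕ Fin n)) k) = monomial Q 1 :=
      prod_X_map vr l
    set u₁ : Lex (Fin n ⊕ Fin n) →₀ ℕ :=
      Q + Finsupp.single (xvar i') 1 + Finsupp.single (yvar j') 1 with hu₁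
    set u₂ : Lex (Fin n ⊕ Fin n) →₀ ℕ :=
      Q + Finsupp.single (xvar j') 1 + Finsupp.single (yvar i') 1 with hu₂
    set hpoly : MvPolynomial (Lex (Fin n ⊕ Fin n)) k :=
      monomial Q 1 * edgeBinomial i' j' with hhpoly
    have hpoly_mem : hpoly ∈ binomialEdgeIdeal n k H := by
      rw [hhpoly, ← hprod]
      exact hmem0
    have hXmono : ∀ s : Lex (Fin n ⊕ Fin n),
        (X s : MvPolynomial (Lex (Fin n ⊕ Fin n)) k) = monomial (Finsupp.single s 1) 1 := fun _ => rfl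
    have hpoly_eq : hpoly = monomial u₁ (1 : k) - monomial u₂ (1 : k) := by
      rw [hhpoly]
      unfold edgeBinomial
      rw [hXmono, hXmono, hXmono, hXmono]
      simp only [monomial_mul, mul_sub, one_mul, hu₁, hu₂, add_assoc]
    have nexji : (xvar j' : Lex (Fin n ⊕ Fin n)) ≠ xvar i' :=
      fun hh => hij.ne' (xvar_injective hh)
    have neyx : ∀ a b : Fin n, (yvar a : Lex (Fin n ⊕ Fin n)) ≠ xvar b :=
      fun a b hh => (xvar_ne_yvar b a) hh.symm
    have e1 : u₁ (xvar i') = Q (xvar i') + 1 := by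
      simp [hu₁, Finsupp.single_apply, nexji, neyx]
    have e2 : u₂ (xvar i') = Q (xvar i') := by
      simp [hu₂, Finsupp.single_apply, nexji, neyx]
    have e3 : ∀ u : Fin n, u < i' →
        u₁ (xvar u) = Q (xvar u) ∧ u₂ (xvar u) = Q (xvar u) := by
      intro u hu
      have h1 : (xvar i' : Lex (Fin n ⊕ Fin n)) ≠ xvar u :=
        fun hh => hu.ne' (xvar_injective hh)
      have h2 : (xvar j' : Lex (Fin n ⊕ Fin n)) ≠ xvar u :=
        fun hh => (hu.trans hij).ne' (xvar_injective hh)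
      constructor <;> simp [hu₁, hu₂, Finsupp.single_apply, h1, h2, neyx]
    have hu12 : u₁ ≠ u₂ := by
      intro h
      rw [h, e2] at e1
      omega
    have hcoeff1 : coeff u₁ hpoly = 1 := by
      rw [hpoly_eq, coeff_sub, coeff_monomial, coeff_monomial, if_pos rfl,
        if_neg (fun h => hu12 h.symm), sub_zero]
    have hne : hpoly ≠ 0 := fun h => by simp [h] at hcoeff1
    have hu₁mem : u₁ ∈ hpoly.support := by
      rw [MvPolynomial.mem_support_iff, hcoeff1]
      exact one_ne_zero
    -- u₂ < u₁ in lex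
    have hlex : toLex u₂ < toLex u₁ := by
      rw [Finsupp.Lex.lt_iff]
      refine ⟨xvar i', ?_, ?_⟩
      · intro j hj
        obtain ⟨u, hu, rfl⟩ := lt_xvar_elim hj
        show u₂ (xvar u) = u₁ (xvar u)
        rw [(e3 u hu).1, (e3 u hu).2]
      · show u₂ (xvar i') < u₁ (xvar i')
        rw [e1, e2]
        omega
    have hmax : ∀ o ∈ hpoly.support, toLex o ≤ toLex u₁ := by
      intro o ho
      have : o ∈ (monomial u₁ (1:k)).support ∪ (monomial u₂ (1:k)).support := by
        rw [hpoly_eq] at ho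
        exact MvPolynomial.support_sub _ _ _ ho
      rw [support_monomial, support_monomial, if_neg (one_ne_zero (α := k)),
        if_neg (one_ne_zero (α := k))] at this
      rcases Finset.mem_union.mp this with h | h
      · rw [Finset.mem_singleton.mp h]
      · rw [Finset.mem_singleton.mp h]
        exact le_of_lt hlex
    -- divisibility
    have hdvd : u₁ ≤ m := by
      have := sum_single_le m (xvar i' :: yvar j' :: l.map vr) ?nd ?mem
      case nd =>
        refine List.nodup_cons.mpr ⟨?_, List.nodup_cons.mpr ⟨?_, hlnd.map hvr_inj⟩⟩
        · intro h
          rcases List.mem_cons.mp h with h | h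
          · exact xvar_ne_yvar i' j' h
          · obtain ⟨z, hz, hzz⟩ := List.mem_map.mp h
            rcases hvr_cases z with hc | hc <;> rw [hc] at hzz
            · exact hi'l (xvar_injective hzz ▸ hz)
            · exact xvar_ne_yvar i' z hzz.symm
        · intro h
          obtain ⟨z, hz, hzz⟩ := List.mem_map.mp h
          rcases hvr_cases z with hc | hc <;> rw [hc] at hzz
          · exact xvar_ne_yvar z j' hzz
          · exact hj'l (yvar_injective hzz ▸ hz)
      case mem =>
        intro idx hidx
        rcases List.mem_cons.mp hidx with h | h
        · rw [h]; exact hx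
        rcases List.mem_cons.mp h with h | h
        · rw [h]; exact hy
        · obtain ⟨z, hz, rfl⟩ := List.mem_map.mp h
          exact hvr_active z hz
      calc u₁ = (List.map (fun idx => Finsupp.single idx 1)
            (xvar i' :: yvar j' :: l.map vr)).sum := by
            simp only [List.map_cons, List.sum_cons, List.map_map, hu₁, hQ]
            rw [Function.comp_def]
            abel
        _ ≤ m := this
    -- conclude
    have hsplit : m = (m - u₁) + u₁ := (tsub_add_cancel_of_le hdvd).symm
    have : monomial m (1:k) = monomial (m - u₁) 1 * monomial u₁ 1 := by
      rw [monomial_mul, one_mul, ← hsplit]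
    rw [this]
    refine Ideal.mul_mem_left _ _ (Ideal.subset_span ?_)
    exact ⟨hpoly, hpoly_mem, hne, u₁, hu₁mem, hmax, rfl⟩


instance : Fintype (Lex (Fin n ⊕ Fin n)) := inferInstanceAs (Fintype (Fin n ⊕ Fin n))

/-- The graph of active vertices: adjacency in `G` between vertices some of whose
variables occur in `m`. -/
def activeGraph (G : SimpleGraph (Fin n)) (m : Lex (Fin n ⊕ Fin n) →₀ ℕ) :
    SimpleGraph (Fin n) where
  Adj u v := G.Adj u v ∧ (m (xvar u) ≠ 0 ∨ m (yvar u) ≠ 0) ∧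
    (m (xvar v) ≠ 0 ∨ m (yvar v) ≠ 0)
  symm := ⟨by rintro u v ⟨h, hu, hv⟩; exact ⟨h.symm, hv, hu⟩⟩
  loopless := ⟨by rintro u ⟨h, _, _⟩; exact G.loopless.irrefl u h⟩

lemma prod_monomial_one {ι σ' : Type*} (s : Finset ι) (g : ι → (σ' →₀ ℕ)) :
    (∏ i ∈ s, (monomial (g i) (1 : k))) = monomial (∑ i ∈ s, g i) 1 := by
  classical
  induction s using Finset.induction_on with
  | empty => simp
  | insert _ _ h ih => rw [Finset.prod_insert h, Finset.sum_insert h, ih, monomial_mul, one_mul]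

lemma exists_companion {G : SimpleGraph (Fin n)} {f : MvPolynomial (Lex (Fin n ⊕ Fin n)) k}
    (hf : f ∈ binomialEdgeIdeal n k G) {m : Lex (Fin n ⊕ Fin n) →₀ ℕ} (hm : m ∈ f.support)
    (hmax : ∀ m' ∈ f.support, toLex m' ≤ toLex m) :
    ∃ i v : Fin n, i < v ∧ m (xvar i) ≠ 0 ∧ m (yvar v) ≠ 0 ∧
      (activeGraph G m).Reachable i v := by
  classical
  set G' := activeGraph G m with hG'
  set CC := G'.ConnectedComponent with hCC
  set mk : Fin n → CC := fun v => G'.connectedComponentMk v with hmk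
  set active : Fin n → Prop := fun v => m (xvar v) ≠ 0 ∨ m (yvar v) ≠ 0 with hactive
  set wfun : Lex (Fin n ⊕ Fin n) → ((Fin n ⊕ CC) →₀ ℕ) := fun idx =>
    Sum.elim (fun v => Finsupp.single (Sum.inl v) 1 + Finsupp.single (Sum.inr (mk v)) 1)
      (fun v => Finsupp.single (Sum.inl v) 1) (ofLex idx) with hwfun
  set avt : Lex (Fin n ⊕ Fin n) → Prop := fun idx =>
    Sum.elim active active (ofLex idx) with havt
  set F : Lex (Fin n ⊕ Fin n) → MvPolynomial (Fin n ⊕ CC) k := fun idx =>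
    if avt idx then monomial (wfun idx) 1 else 0 with hF
  set cmap : (Lex (Fin n ⊕ Fin n) →₀ ℕ) → ((Fin n ⊕ CC) →₀ ℕ) := fun v =>
    ∑ idx ∈ v.support, v idx • wfun idx with hcmap
  -- coordinate computations for cmap
  have cmap_apply : ∀ (v : Lex (Fin n ⊕ Fin n) →₀ ℕ) (t : Fin n ⊕ CC),
      cmap v t = ∑ z : Fin n ⊕ Fin n, v (toLex z) * wfun (toLex z) t := by
    intro v t
    rw [hcmap]
    rw [Finsupp.finset_sum_apply]
    rw [Finset.sum_subset (Finset.subset_univ v.support) (fun idx _ hnot => by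
      rw [Finsupp.notMem_support_iff.mp hnot]; simp)]
    rw [← Fintype.sum_equiv (toLex : (Fin n ⊕ Fin n) ≃ Lex (Fin n ⊕ Fin n))
      (fun z => v (toLex z) * wfun (toLex z) t) (fun idx => (v idx • wfun idx) t)
      (fun z => by simp)]
  have f1 : ∀ (v : Lex (Fin n ⊕ Fin n) →₀ ℕ) (a : Fin n),
      cmap v (Sum.inl a) = v (xvar a) + v (yvar a) := by
    intro v a
    rw [cmap_apply, Fintype.sum_sum_type]
    have h1 : ∀ u : Fin n, wfun (toLex (Sum.inl u)) (Sum.inl a) = if u = a then 1 else 0 := by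
      intro u
      simp [hwfun, Finsupp.single_apply]
    have h2 : ∀ u : Fin n, wfun (toLex (Sum.inr u)) (Sum.inl a) = if u = a then 1 else 0 := by
      intro u
      simp [hwfun, Finsupp.single_apply]
    simp only [h1, h2, mul_ite, mul_one, mul_zero]
    rw [Finset.sum_ite_eq' Finset.univ a (fun u => v (toLex (Sum.inl u))),
      Finset.sum_ite_eq' Finset.univ a (fun u => v (toLex (Sum.inr u)))]
    simp
  have f2 : ∀ (v : Lex (Fin n ⊕ Fin n) →₀ ℕ) (cc : CC),
      cmap v (Sum.inr cc) = ∑ u ∈ Finset.univ.filter (fun u => mk u = cc), v (xvar u) := by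
    intro v cc
    rw [cmap_apply, Fintype.sum_sum_type]
    have h1 : ∀ u : Fin n, wfun (toLex (Sum.inl u)) (Sum.inr cc)
        = if mk u = cc then 1 else 0 := by
      intro u
      simp [hwfun, Finsupp.single_apply]
    have h2 : ∀ u : Fin n, wfun (toLex (Sum.inr u)) (Sum.inr cc) = 0 := by
      intro u
      simp [hwfun, Finsupp.single_apply]
    simp only [h1, h2, mul_ite, mul_one, mul_zero, Finset.sum_const_zero, add_zero]
    rw [Finset.sum_filter]
  -- φ of monomials
  have f3a : ∀ (v : Lex (Fin n ⊕ Fin n) →₀ ℕ) (c : k), (∀ idx ∈ v.support, avt idx) →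
      aeval F (monomial v c) = monomial (cmap v) c := by
    intro v c hcl
    rw [aeval_monomial, Finsupp.prod]
    have : ∀ idx ∈ v.support, F idx ^ v idx = monomial (v idx • wfun idx) 1 := by
      intro idx hidx
      rw [hF]
      simp only
      rw [if_pos (hcl idx hidx), monomial_pow, one_pow]
    rw [Finset.prod_congr rfl this, prod_monomial_one]
    rw [algebraMap_eq, C_mul_monomial, mul_one]
  have f3b : ∀ (v : Lex (Fin n ⊕ Fin n) →₀ ℕ) (c : k), (∃ idx ∈ v.support, ¬ avt idx) →
      aeval F (monomial v c) = 0 := by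
    intro v c ⟨idx0, hidx0, hbad⟩
    rw [aeval_monomial, Finsupp.prod]
    rw [Finset.prod_eq_zero hidx0 (by
      rw [hF]; simp only; rw [if_neg hbad]
      exact zero_pow (Finsupp.mem_support_iff.mp hidx0)), mul_zero]
  -- φ kills the ideal
  have f4 : aeval F f = 0 := by
    have hker : binomialEdgeIdeal n k G ≤ RingHom.ker ((aeval F :
        MvPolynomial (Lex (Fin n ⊕ Fin n)) k →ₐ[k] MvPolynomial (Fin n ⊕ CC) k) :
        MvPolynomial (Lex (Fin n ⊕ Fin n)) k →+* MvPolynomial (Fin n ⊕ CC) k) := by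
      rw [binomialEdgeIdeal, Ideal.span_le]
      rintro g ⟨i, j, hadj, rfl⟩
      rw [SetLike.mem_coe, RingHom.mem_ker]
      simp only [RingHom.coe_coe, map_sub, map_mul, aeval_X]
      by_cases hi : active i
      · by_cases hj : active j
        · have hreach : mk i = mk j :=
            SimpleGraph.ConnectedComponent.sound (SimpleGraph.Adj.reachable
              (show G'.Adj i j from ⟨hadj, hi, hj⟩))
          have hFi : F (toLex (Sum.inl i)) = monomial (wfun (toLex (Sum.inl i))) 1 := by
            rw [hF]; simp only; rw [if_pos (by simpa [havt] using hi)]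
          have hFj : F (toLex (Sum.inl j)) = monomial (wfun (toLex (Sum.inl j))) 1 := by
            rw [hF]; simp only; rw [if_pos (by simpa [havt] using hj)]
          have hFi' : F (toLex (Sum.inr i)) = monomial (wfun (toLex (Sum.inr i))) 1 := by
            rw [hF]; simp only; rw [if_pos (by simpa [havt] using hi)]
          have hFj' : F (toLex (Sum.inr j)) = monomial (wfun (toLex (Sum.inr j))) 1 := by
            rw [hF]; simp only; rw [if_pos (by simpa [havt] using hj)]
          rw [hFi, hFj, hFi', hFj', monomial_mul, monomial_mul, one_mul]
          have hexp : wfun (toLex (Sum.inl i)) + wfun (toLex (Sum.inr j))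
              = wfun (toLex (Sum.inl j)) + wfun (toLex (Sum.inr i)) := by
            simp only [hwfun, ofLex_toLex, Sum.elim_inl, Sum.elim_inr]
            rw [hreach]
            abel
          rw [hexp, sub_self]
        · have hFj : F (toLex (Sum.inl j)) = 0 := by
            rw [hF]; simp only; rw [if_neg (by simpa [havt] using hj)]
          have hFj' : F (toLex (Sum.inr j)) = 0 := by
            rw [hF]; simp only; rw [if_neg (by simpa [havt] using hj)]
          rw [hFj, hFj']
          ring
      · have hFi : F (toLex (Sum.inl i)) = 0 := by
          rw [hF]; simp only; rw [if_neg (by simpa [havt] using hi)]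
        have hFi' : F (toLex (Sum.inr i)) = 0 := by
          rw [hF]; simp only; rw [if_neg (by simpa [havt] using hi)]
        rw [hFi, hFi']
        ring
    exact RingHom.mem_ker.mp (hker hf)
  -- m itself is clean
  have hmclean : ∀ idx ∈ m.support, avt idx := by
    intro idx hidx
    have hne := Finsupp.mem_support_iff.mp hidx
    have hidx0 : idx = toLex (ofLex idx) := rfl
    rcases hidx2 : ofLex idx with u | u
    · have : idx = xvar u := by rw [hidx0, hidx2]
      rw [this] at hne ⊢
      simp only [havt, ofLex_toLex, Sum.elim_inl]
      exact Or.inl hne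
    · have : idx = yvar u := by rw [hidx0, hidx2]
      rw [this] at hne ⊢
      simp only [havt, ofLex_toLex, Sum.elim_inr]
      exact Or.inr hne
  -- the companion monomial
  have hcomp : ∃ m' ∈ f.support, m' ≠ m ∧ (∀ idx ∈ m'.support, avt idx) ∧ cmap m' = cmap m := by
    by_contra hno
    push_neg at hno
    have hzero : (0 : k) = coeff (cmap m) (aeval F f) := by rw [f4, coeff_zero]
    have hexp : aeval F f = ∑ v ∈ f.support, aeval F (monomial v (coeff v f)) := by
      conv_lhs => rw [f.as_sum]
      rw [map_sum]
    rw [hexp, coeff_sum] at hzero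
    have hterm : ∀ v ∈ f.support, v ≠ m →
        coeff (cmap m) (aeval F (monomial v (coeff v f))) = 0 := by
      intro v hv hvm
      by_cases hcl : ∀ idx ∈ v.support, avt idx
      · rw [f3a v _ hcl, coeff_monomial]
        rw [if_neg (hno v hv hvm hcl)]
      · push_neg at hcl
        rw [f3b v _ hcl, coeff_zero]
    rw [Finset.sum_eq_single_of_mem m hm hterm] at hzero
    rw [f3a m _ hmclean, coeff_monomial, if_pos rfl] at hzero
    exact (Finsupp.mem_support_iff.mp hm) hzero.symm
  obtain ⟨m', hm'supp, hm'ne, hm'clean, hm'c⟩ := hcomp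
  -- lexicographic comparison
  have hlt : toLex m' < toLex m :=
    lt_of_le_of_ne (hmax m' hm'supp) (fun h => hm'ne (toLex.injective h))
  rw [Finsupp.Lex.lt_iff] at hlt
  obtain ⟨ι, hpre, hltι⟩ := hlt
  have hxy : ∀ u : Fin n, m' (xvar u) + m' (yvar u) = m (xvar u) + m (yvar u) := by
    intro u
    rw [← f1, ← f1, hm'c]
  have hccsum : ∀ cc : CC, ∑ u ∈ Finset.univ.filter (fun u => mk u = cc), m' (xvar u)
      = ∑ u ∈ Finset.univ.filter (fun u => mk u = cc), m (xvar u) := by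
    intro cc
    rw [← f2, ← f2, hm'c]
  have hι0 : ι = toLex (ofLex ι) := rfl
  rcases hι : ofLex ι with i | i
  · -- ι = xvar i
    have hιx : ι = xvar i := by rw [hι0, hι]
    rw [hιx] at hpre hltι
    have hprex : ∀ u : Fin n, u < i → m' (xvar u) = m (xvar u) := by
      intro u hu
      exact hpre (xvar u) (xvar_lt_xvar.mpr hu)
    have hlti : m' (xvar i) < m (xvar i) := hltι
    set T := Finset.univ.filter (fun u => mk u = mk i) with hT
    have hiT : i ∈ T := by simp [hT]
    have hclaim : ∃ u ∈ T, i < u ∧ m (xvar u) < m' (xvar u) := by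
      by_contra hcon
      push_neg at hcon
      have hle : ∀ u ∈ T, m' (xvar u) ≤ m (xvar u) := by
        intro u hu
        rcases lt_trichotomy u i with h | h | h
        · exact (hprex u h).le
        · rw [h]; exact hlti.le
        · exact hcon u hu h
      have := Finset.sum_lt_sum hle ⟨i, hiT, hlti⟩
      rw [hccsum (mk i)] at this
      exact lt_irrefl _ this
    obtain ⟨u, huT, hiu, hux⟩ := hclaim
    refine ⟨i, u, hiu, by omega, ?_, ?_⟩
    · have := hxy u
      omega
    · have : mk u = mk i := (Finset.mem_filter.mp huT).2
      exact (SimpleGraph.ConnectedComponent.eq.mp this).symm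
  · -- ι = yvar i : impossible
    exfalso
    have hιy : ι = yvar i := by rw [hι0, hι]
    rw [hιy] at hpre hltι
    have hprex : ∀ u : Fin n, m' (xvar u) = m (xvar u) := by
      intro u
      exact hpre (xvar u) (xvar_lt_yvar u i)
    have := hxy i
    have h2 := hprex i
    have hlti : m' (yvar i) < m (yvar i) := hltι
    omega


lemma walk_support_active {G : SimpleGraph (Fin n)} {m : Lex (Fin n ⊕ Fin n) →₀ ℕ} :
    ∀ {u v : Fin n} (w : (activeGraph G m).Walk u v),
      (m (xvar u) ≠ 0 ∨ m (yvar u) ≠ 0) →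
      ∀ z ∈ w.support, m (xvar z) ≠ 0 ∨ m (yvar z) ≠ 0 := by
  intro u v w
  induction w with
  | nil =>
    intro hu z hz
    rw [SimpleGraph.Walk.support_nil, List.mem_singleton] at hz
    rwa [hz]
  | cons h w ih =>
    intro hu z hz
    rw [SimpleGraph.Walk.support_cons, List.mem_cons] at hz
    rcases hz with rfl | hz
    · exact hu
    · exact ih h.2.2 z hz

section Regions

variable {G H₁ H₂ : SimpleGraph (Fin n)} {A B C : Set (Fin n)}
  {m : Lex (Fin n ⊕ Fin n) →₀ ℕ}
  (hcover : A ∪ B ∪ C = Set.univ)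
  (hAB : Disjoint A B) (hAC : Disjoint A C) (hBC : Disjoint B C)
  (hBcomplete : ∀ a ∈ B, ∀ b ∈ B, a ≠ b → G.Adj a b)
  (hH₁ : ∀ a b : Fin n, H₁.Adj a b ↔ (G.Adj a b ∧ a ∈ A ∪ B ∧ b ∈ A ∪ B))
  (hH₂ : ∀ a b : Fin n, H₂.Adj a b ↔ (G.Adj a b ∧ a ∈ B ∪ C ∧ b ∈ B ∪ C))
  (hedges : ∀ a b : Fin n, G.Adj a b ↔ (H₁.Adj a b ∨ H₂.Adj a b))

include hcover in
lemma region' (x : Fin n) : x ∈ A ∨ x ∈ B ∪ C := by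
  have : x ∈ A ∪ B ∪ C := by rw [hcover]; trivial
  rcases this with h | h
  · rcases h with h | h
    · exact Or.inl h
    · exact Or.inr (Or.inl h)
  · exact Or.inr (Or.inr h)

include hcover in
lemma region'' (x : Fin n) : x ∈ A ∪ B ∨ x ∈ C := by
  have : x ∈ A ∪ B ∪ C := by rw [hcover]; trivial
  rcases this with h | h
  · exact Or.inl h
  · exact Or.inr h

include hAB hAC hBC hH₁ hH₂ hedges in
lemma noAC {a c : Fin n} (h : G.Adj a c) (ha : a ∈ A) (hc : c ∈ C) : False := by
  rcases (hedges a c).mp h with h1 | h2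
  · rcases ((hH₁ a c).mp h1).2.2 with h' | h'
    · exact Set.disjoint_left.mp hAC h' hc
    · exact Set.disjoint_left.mp hBC h' hc
  · rcases ((hH₂ a c).mp h2).2.1 with h' | h'
    · exact Set.disjoint_left.mp hAB ha h'
    · exact Set.disjoint_left.mp hAC ha h'

include hAB hAC hBC hH₁ hH₂ hedges in
lemma adjA {u x : Fin n} (h : G.Adj u x) (hx : x ∈ A) (hu : u ∈ B ∪ C) : u ∈ B := by
  rcases (hedges u x).mp h with h1 | h2
  · rcases ((hH₁ u x).mp h1).2.1 with h' | h'
    · exfalso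
      rcases hu with h'' | h''
      · exact Set.disjoint_left.mp hAB h' h''
      · exact Set.disjoint_left.mp hAC h' h''
    · exact h'
  · exfalso
    rcases ((hH₂ u x).mp h2).2.2 with h' | h'
    · exact Set.disjoint_left.mp hAB hx h'
    · exact Set.disjoint_left.mp hAC hx h'

include hAB hAC hBC hH₁ hH₂ hedges in
lemma adjC {u x : Fin n} (h : G.Adj u x) (hx : x ∈ C) (hu : u ∈ A ∪ B) : u ∈ B := by
  rcases (hedges u x).mp h with h1 | h2
  · exfalso
    rcases ((hH₁ u x).mp h1).2.2 with h' | h'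
    · exact Set.disjoint_left.mp hAC h' hx
    · exact Set.disjoint_left.mp hBC h' hx
  · rcases ((hH₂ u x).mp h2).2.1 with h' | h'
    · exact h'
    · exfalso
      rcases hu with h'' | h''
      · exact Set.disjoint_left.mp hAC h'' h'
      · exact Set.disjoint_left.mp hBC h'' h'

include hAB hAC in
lemma notAandBC {u : Fin n} (hu : u ∈ A) (hu' : u ∈ B ∪ C) : False := by
  rcases hu' with h | h
  · exact Set.disjoint_left.mp hAB hu h
  · exact Set.disjoint_left.mp hAC hu h

include hAC hBC in
lemma notCandAB {u : Fin n} (hu : u ∈ C) (hu' : u ∈ A ∪ B) : False := by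
  rcases hu' with h | h
  · exact Set.disjoint_left.mp hAC h hu
  · exact Set.disjoint_left.mp hBC h hu

include hcover hAB hAC hBC hBcomplete hH₁ hH₂ hedges in
lemma shortcut₂ :
    ∀ (N : ℕ) {u v : Fin n} (w : (activeGraph G m).Walk u v), w.length ≤ N → v ∈ B ∪ C →
      ((u ∈ B ∪ C → ∃ w' : H₂.Walk u v, ∀ z ∈ w'.support, z ∈ w.support) ∧
       (u ∈ A → ∃ b ∈ B, b ∈ w.support ∧
          ∃ w' : H₂.Walk b v, ∀ z ∈ w'.support, z ∈ w.support)) := by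
  intro N
  induction N with
  | zero =>
    intro u v w hlen hv
    cases w with
    | nil =>
      refine ⟨fun hu => ⟨SimpleGraph.Walk.nil, fun z hz => hz⟩, fun hu => ?_⟩
      exact absurd hv (fun hv' => notAandBC hAB hAC hu hv')
    | cons h w => simp [SimpleGraph.Walk.length_cons] at hlen
  | succ N ih =>
    intro u v w hlen hv
    cases w with
    | nil =>
      refine ⟨fun hu => ⟨SimpleGraph.Walk.nil, fun z hz => hz⟩, fun hu => ?_⟩
      exact absurd hv (fun hv' => notAandBC hAB hAC hu hv')
    | @cons _ x _ h w₁ =>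
      have hGux : G.Adj u x := h.1
      have hlen1 : w₁.length ≤ N := by
        rw [SimpleGraph.Walk.length_cons] at hlen
        omega
      have IH := ih w₁ hlen1 hv
      constructor
      · intro hu
        rcases region' hcover x with hxA | hxBC
        · have huB : u ∈ B := adjA hAB hAC hBC hH₁ hH₂ hedges hGux hxA hu
          obtain ⟨b, hbB, hbsup, w', hw'⟩ := IH.2 hxA
          by_cases hub : u = b
          · subst hub
            refine ⟨w', fun z hz => ?_⟩
            rw [SimpleGraph.Walk.support_cons]
            exact List.mem_cons_of_mem _ (hw' z hz)
          · have hadj : H₂.Adj u b :=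
              (hH₂ u b).mpr ⟨hBcomplete u huB b hbB hub, Or.inl huB, Or.inl hbB⟩
            refine ⟨SimpleGraph.Walk.cons hadj w', fun z hz => ?_⟩
            rw [SimpleGraph.Walk.support_cons, List.mem_cons] at hz
            rcases hz with rfl | hz
            · exact SimpleGraph.Walk.start_mem_support _
            · rw [SimpleGraph.Walk.support_cons]
              exact List.mem_cons_of_mem _ (hw' z hz)
        · obtain ⟨w', hw'⟩ := IH.1 hxBC
          have hadj : H₂.Adj u x := (hH₂ u x).mpr ⟨hGux, hu, hxBC⟩
          refine ⟨SimpleGraph.Walk.cons hadj w', fun z hz => ?_⟩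
          rw [SimpleGraph.Walk.support_cons, List.mem_cons] at hz
          rcases hz with rfl | hz
          · exact SimpleGraph.Walk.start_mem_support _
          · rw [SimpleGraph.Walk.support_cons]
            exact List.mem_cons_of_mem _ (hw' z hz)
      · intro hu
        rcases region' hcover x with hxA | hxBC
        · obtain ⟨b, hbB, hbsup, w', hw'⟩ := IH.2 hxA
          refine ⟨b, hbB, ?_, w', fun z hz => ?_⟩
          · rw [SimpleGraph.Walk.support_cons]
            exact List.mem_cons_of_mem _ hbsup
          · rw [SimpleGraph.Walk.support_cons]
            exact List.mem_cons_of_mem _ (hw' z hz)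
        · rcases hxBC with hxB | hxC
          · obtain ⟨w', hw'⟩ := IH.1 (Or.inl hxB)
            refine ⟨x, hxB, ?_, w', fun z hz => ?_⟩
            · rw [SimpleGraph.Walk.support_cons]
              exact List.mem_cons_of_mem _ (SimpleGraph.Walk.start_mem_support w₁)
            · rw [SimpleGraph.Walk.support_cons]
              exact List.mem_cons_of_mem _ (hw' z hz)
          · exact (noAC hAB hAC hBC hH₁ hH₂ hedges hGux hu hxC).elim

include hcover hAB hAC hBC hBcomplete hH₁ hH₂ hedges in
lemma shortcut₁ :
    ∀ (N : ℕ) {u v : Fin n} (w : (activeGraph G m).Walk u v), w.length ≤ N → v ∈ A ∪ B →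
      ((u ∈ A ∪ B → ∃ w' : H₁.Walk u v, ∀ z ∈ w'.support, z ∈ w.support) ∧
       (u ∈ C → ∃ b ∈ B, b ∈ w.support ∧
          ∃ w' : H₁.Walk b v, ∀ z ∈ w'.support, z ∈ w.support)) := by
  intro N
  induction N with
  | zero =>
    intro u v w hlen hv
    cases w with
    | nil =>
      refine ⟨fun hu => ⟨SimpleGraph.Walk.nil, fun z hz => hz⟩, fun hu => ?_⟩
      exact absurd hv (fun hv' => notCandAB hAC hBC hu hv')
    | cons h w => simp [SimpleGraph.Walk.length_cons] at hlen
  | succ N ih =>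
    intro u v w hlen hv
    cases w with
    | nil =>
      refine ⟨fun hu => ⟨SimpleGraph.Walk.nil, fun z hz => hz⟩, fun hu => ?_⟩
      exact absurd hv (fun hv' => notCandAB hAC hBC hu hv')
    | @cons _ x _ h w₁ =>
      have hGux : G.Adj u x := h.1
      have hlen1 : w₁.length ≤ N := by
        rw [SimpleGraph.Walk.length_cons] at hlen
        omega
      have IH := ih w₁ hlen1 hv
      constructor
      · intro hu
        rcases region'' hcover x with hxAB | hxC
        · obtain ⟨w', hw'⟩ := IH.1 hxAB
          have hadj : H₁.Adj u x := (hH₁ u x).mpr ⟨hGux, hu, hxAB⟩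
          refine ⟨SimpleGraph.Walk.cons hadj w', fun z hz => ?_⟩
          rw [SimpleGraph.Walk.support_cons, List.mem_cons] at hz
          rcases hz with rfl | hz
          · exact SimpleGraph.Walk.start_mem_support _
          · rw [SimpleGraph.Walk.support_cons]
            exact List.mem_cons_of_mem _ (hw' z hz)
        · have huB : u ∈ B := adjC hAB hAC hBC hH₁ hH₂ hedges hGux hxC hu
          obtain ⟨b, hbB, hbsup, w', hw'⟩ := IH.2 hxC
          by_cases hub : u = b
          · subst hub
            refine ⟨w', fun z hz => ?_⟩
            rw [SimpleGraph.Walk.support_cons]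
            exact List.mem_cons_of_mem _ (hw' z hz)
          · have hadj : H₁.Adj u b :=
              (hH₁ u b).mpr ⟨hBcomplete u huB b hbB hub, Or.inr huB, Or.inr hbB⟩
            refine ⟨SimpleGraph.Walk.cons hadj w', fun z hz => ?_⟩
            rw [SimpleGraph.Walk.support_cons, List.mem_cons] at hz
            rcases hz with rfl | hz
            · exact SimpleGraph.Walk.start_mem_support _
            · rw [SimpleGraph.Walk.support_cons]
              exact List.mem_cons_of_mem _ (hw' z hz)
      · intro hu
        rcases region'' hcover x with hxAB | hxC
        · rcases hxAB with hxA | hxB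
          · exact (noAC hAB hAC hBC hH₁ hH₂ hedges hGux.symm hxA hu).elim
          · obtain ⟨w', hw'⟩ := IH.1 (Or.inr hxB)
            refine ⟨x, hxB, ?_, w', fun z hz => ?_⟩
            · rw [SimpleGraph.Walk.support_cons]
              exact List.mem_cons_of_mem _ (SimpleGraph.Walk.start_mem_support w₁)
            · rw [SimpleGraph.Walk.support_cons]
              exact List.mem_cons_of_mem _ (hw' z hz)
        · obtain ⟨b, hbB, hbsup, w', hw'⟩ := IH.2 hxC
          refine ⟨b, hbB, ?_, w', fun z hz => ?_⟩
          · rw [SimpleGraph.Walk.support_cons]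
            exact List.mem_cons_of_mem _ hbsup
          · rw [SimpleGraph.Walk.support_cons]
            exact List.mem_cons_of_mem _ (hw' z hz)

include hcover hAB hAC hBC hH₁ hH₂ hedges in
lemma bOnPath : ∀ {u v : Fin n} (w : (activeGraph G m).Walk u v), u ∈ A → v ∈ C →
    ∃ b ∈ B, b ∈ w.support := by
  intro u v w
  induction w with
  | nil =>
    intro hu hv
    exact absurd hv (Set.disjoint_left.mp hAC hu)
  | @cons u x v h w₁ ih =>
    intro hu hv
    rcases region' hcover x with hxA | hxBC
    · obtain ⟨b, hbB, hbs⟩ := ih hxA hv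
      exact ⟨b, hbB, by
        rw [SimpleGraph.Walk.support_cons]; exact List.mem_cons_of_mem _ hbs⟩
    · rcases hxBC with hxB | hxC
      · exact ⟨x, hxB, by
          rw [SimpleGraph.Walk.support_cons]
          exact List.mem_cons_of_mem _ (SimpleGraph.Walk.start_mem_support w₁)⟩
      · exact (noAC hAB hAC hBC hH₁ hH₂ hedges h.1 hu hxC).elim

end Regions

lemma initial_mono {G H : SimpleGraph (Fin n)} (h : ∀ a b, H.Adj a b → G.Adj a b) :
    initialIdeal n k (binomialEdgeIdeal n k H) ≤ initialIdeal n k (binomialEdgeIdeal n k G) := by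
  have hJ : binomialEdgeIdeal n k H ≤ binomialEdgeIdeal n k G := by
    rw [binomialEdgeIdeal, Ideal.span_le]
    rintro g ⟨i, j, hadj, rfl⟩
    exact Ideal.subset_span ⟨i, j, h i j hadj, rfl⟩
  rw [initialIdeal, Ideal.span_le]
  rintro g ⟨f, hf, hf0, mm, hmm, hmax, rfl⟩
  rw [SetLike.mem_coe, initialIdeal]
  exact Ideal.subset_span ⟨f, hJ hf, hf0, mm, hmm, hmax, rfl⟩

end BEI

open BEI

/-- Let `[n] = A ⊔ B ⊔ C` be a partition into nonempty sets with the induced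
subgraph on `B` complete and `a < b < c` whenever `a ∈ A`, `b ∈ B`, `c ∈ C`.
Let `H₁` and `H₂` be the induced subgraphs of `G` on `A ∪ B` and on `B ∪ C`
(regarded as graphs on `[n]`), and suppose `E(G) = E(H₁) ∪ E(H₂)`. Then
`in_<(J_G) = in_<(J_{H₁}) + in_<(J_{H₂})` for the lexicographic order `<` with
`x_1 > … > x_n > y_1 > … > y_n`. -/
theorem initialIdeal_binomialEdgeIdeal_eq_sum {n : ℕ} (k : Type*) [Field k]
    (G H₁ H₂ : SimpleGraph (Fin n)) (A B C : Set (Fin n))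
    (hA : A.Nonempty) (hB : B.Nonempty) (hC : C.Nonempty)
    (hcover : A ∪ B ∪ C = Set.univ)
    (hAB : Disjoint A B) (hAC : Disjoint A C) (hBC : Disjoint B C)
    (hBcomplete : ∀ a ∈ B, ∀ b ∈ B, a ≠ b → G.Adj a b)
    (hABlt : ∀ a ∈ A, ∀ b ∈ B, a < b) (hBClt : ∀ b ∈ B, ∀ c ∈ C, b < c)
    (hAClt : ∀ a ∈ A, ∀ c ∈ C, a < c)
    (hH₁ : ∀ a b : Fin n, H₁.Adj a b ↔ (G.Adj a b ∧ a ∈ A ∪ B ∧ b ∈ A ∪ B))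
    (hH₂ : ∀ a b : Fin n, H₂.Adj a b ↔ (G.Adj a b ∧ a ∈ B ∪ C ∧ b ∈ B ∪ C))
    (hedges : ∀ a b : Fin n, G.Adj a b ↔ (H₁.Adj a b ∨ H₂.Adj a b)) :
    initialIdeal n k (binomialEdgeIdeal n k G) =
      initialIdeal n k (binomialEdgeIdeal n k H₁) +
        initialIdeal n k (binomialEdgeIdeal n k H₂) := by
  classical
  apply le_antisymm
  · rw [initialIdeal, Ideal.span_le]
    rintro g ⟨f, hfI, hf0, m, hmsupp, hmax, rfl⟩
    rw [SetLike.mem_coe, Ideal.add_eq_sup]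
    obtain ⟨i, v, hiv, hxi, hyv, hreach⟩ := exists_companion hfI hmsupp hmax
    refine hreach.elim fun w₀ => ?_
    have hact := walk_support_active w₀ (Or.inl hxi)
    rcases region' hcover i with hiA | hiBC
    · rcases region'' hcover v with hvAB | hvC
      · obtain ⟨w', hw'⟩ := (shortcut₁ hcover hAB hAC hBC hBcomplete hH₁ hH₂ hedges
          w₀.length w₀ le_rfl hvAB).1 (Or.inl hiA)
        exact Submodule.mem_sup_left (monomial_mem_initial_of_walk H₁ m hiv hxi hyv w'
          (fun z hz => hact z (hw' z hz)))
      · obtain ⟨b, hbB, hbmem⟩ := bOnPath hcover hAB hAC hBC hH₁ hH₂ hedges w₀ hiA hvC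
        rcases hact b hbmem with hbx | hby
        · obtain ⟨w', hw'⟩ := (shortcut₂ hcover hAB hAC hBC hBcomplete hH₁ hH₂ hedges
            (w₀.dropUntil b hbmem).length (w₀.dropUntil b hbmem) le_rfl (Or.inr hvC)).1
            (Or.inl hbB)
          exact Submodule.mem_sup_right (monomial_mem_initial_of_walk H₂ m
            (hBClt b hbB v hvC) hbx hyv w' (fun z hz => hact z
              (SimpleGraph.Walk.support_dropUntil_subset w₀ hbmem (hw' z hz))))
        · obtain ⟨w', hw'⟩ := (shortcut₁ hcover hAB hAC hBC hBcomplete hH₁ hH₂ hedges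
            (w₀.takeUntil b hbmem).length (w₀.takeUntil b hbmem) le_rfl (Or.inr hbB)).1
            (Or.inl hiA)
          exact Submodule.mem_sup_left (monomial_mem_initial_of_walk H₁ m
            (hABlt i hiA b hbB) hxi hby w' (fun z hz => hact z
              (SimpleGraph.Walk.support_takeUntil_subset w₀ hbmem (hw' z hz))))
    · rcases hiBC with hiB | hiC
      · rcases region' hcover v with hvA | hvBC
        · exact absurd (hABlt v hvA i hiB) (lt_asymm hiv)
        · obtain ⟨w', hw'⟩ := (shortcut₂ hcover hAB hAC hBC hBcomplete hH₁ hH₂ hedges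
            w₀.length w₀ le_rfl hvBC).1 (Or.inl hiB)
          exact Submodule.mem_sup_right (monomial_mem_initial_of_walk H₂ m hiv hxi hyv w'
            (fun z hz => hact z (hw' z hz)))
      · rcases region' hcover v with hvA | hvBC
        · exact absurd (hAClt v hvA i hiC) (lt_asymm hiv)
        · rcases hvBC with hvB | hvC
          · exact absurd (hBClt v hvB i hiC) (lt_asymm hiv)
          · obtain ⟨w', hw'⟩ := (shortcut₂ hcover hAB hAC hBC hBcomplete hH₁ hH₂ hedges
              w₀.length w₀ le_rfl (Or.inr hvC)).1 (Or.inr hiC)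
            exact Submodule.mem_sup_right (monomial_mem_initial_of_walk H₂ m hiv hxi hyv w'
              (fun z hz => hact z (hw' z hz)))
  · rw [Ideal.add_eq_sup]
    exact sup_le (initial_mono fun a b h => ((hH₁ a b).mp h).1)
      (initial_mono fun a b h => ((hH₂ a b).mp h).1)
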